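/- Let ω₀ ≠ 0 and a ≠ 0 be real numbers, ω̂ a real row vector of length d−1, and Â a symmetric (d−1)×(d−1) real matrix. Set b = (a/ω₀)·ω̂, A = [[a, b],[bᵀ, Â]], and A_ω = [[0, ω₀, ω̂],[ω₀, a, b],[ω̂ᵀ, bᵀ, Â]]. Then det A_ω = −(ω₀²/a) · det A. In particular, under this relation b = (a/ω₀)ω̂, det A ≠ 0 if and only if det A_ω ≠ 0. -/

import Mathlib

open Matrix

/-- When `b = (a/ω₀)·ω̂`, the bordered determinant satisfies
`det A_ω = −(ω₀²/a) · det A`, where `A = [[a, b],[bᵀ, Â]]` and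
`A_ω = [[0, ω₀, ω̂],[ω₀, a, b],[ω̂ᵀ, bᵀ, Â]]`.  In particular `det A ≠ 0 ↔ det A_ω ≠ 0`. -/
theorem billiard_twist_det (n : ℕ) (hn : 1 ≤ n)
    (ω₀ a : ℝ) (hω₀ : ω₀ ≠ 0) (ha : a ≠ 0)
    (ωhat : Matrix (Fin 1) (Fin n) ℝ) (Ahat : Matrix (Fin n) (Fin n) ℝ)
    (hAhat : Ahat.IsSymm)
    (b : Matrix (Fin 1) (Fin n) ℝ) (hb : b = (a / ω₀) • ωhat)
    (A : Matrix (Fin 1 ⊕ Fin n) (Fin 1 ⊕ Fin n) ℝ)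
    (hA : A = Matrix.fromBlocks (a • (1 : Matrix (Fin 1) (Fin 1) ℝ)) b bᵀ Ahat)
    (Aω : Matrix (Fin 2 ⊕ Fin n) (Fin 2 ⊕ Fin n) ℝ)
    (hAω : Aω = Matrix.fromBlocks
          (Matrix.of (fun i j : Fin 2 =>
            if i = 0 ∧ j = 0 then 0
            else if i = 1 ∧ j = 1 then a else ω₀))
          (Matrix.of (fun (i : Fin 2) (j : Fin n) =>
            if i = 0 then ωhat 0 j else b 0 j))
          (Matrix.of (fun (j : Fin n) (i : Fin 2) =>
            if i = 0 then ωhat 0 j else b 0 j))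
          Ahat) :
    Aω.det = -(ω₀ ^ 2 / a) * A.det ∧ (A.det ≠ 0 ↔ Aω.det ≠ 0) := by
  classical
  have key : Aω.det = -(ω₀ ^ 2 / a) * A.det := by
    let e : Fin 1 ⊕ (Fin 1 ⊕ Fin n) ≃ Fin 2 ⊕ Fin n :=
      (Equiv.sumAssoc (Fin 1) (Fin 1) (Fin n)).symm.trans
        (Equiv.sumCongr finSumFinEquiv (Equiv.refl (Fin n)))
    have he1 : e (Sum.inl 0) = Sum.inl 0 := rfl
    have he2 : e (Sum.inr (Sum.inl 0)) = Sum.inl 1 := rfl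
    have he3 : ∀ k : Fin n, e (Sum.inr (Sum.inr k)) = Sum.inr k := fun k => rfl
    set B : Matrix (Fin 1 ⊕ (Fin 1 ⊕ Fin n)) (Fin 1 ⊕ (Fin 1 ⊕ Fin n)) ℝ :=
      Aω.submatrix e e with hB
    have hdetB : B.det = Aω.det := Matrix.det_submatrix_equiv_self e Aω
    have hrow : (B.updateRow (Sum.inl 0)
        (B (Sum.inl 0) + (-(ω₀/a)) • B (Sum.inr (Sum.inl 0)))).det = B.det :=
      Matrix.det_updateRow_add_smul_self B (by simp) (-(ω₀/a))
    have hblock : B.updateRow (Sum.inl 0)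
        (B (Sum.inl 0) + (-(ω₀/a)) • B (Sum.inr (Sum.inl 0))) =
        Matrix.fromBlocks
          (Matrix.of fun _ _ : Fin 1 => -(ω₀^2/a))
          0
          (Matrix.of fun (p : Fin 1 ⊕ Fin n) (_ : Fin 1) =>
            Sum.elim (fun _ => ω₀) (fun k => ωhat 0 k) p)
          A := by
      subst hb hA hAω
      ext i j
      rcases i with i | i
      · fin_cases i
        rcases j with j | j
        · fin_cases j
          simp [hB, he1, he2, Matrix.submatrix_apply, Matrix.fromBlocks]
          field_simp
        · rcases j with j | j
          · fin_cases j
            simp [hB, he1, he2, Matrix.submatrix_apply, Matrix.fromBlocks]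
            field_simp
            ring
          · simp [hB, he1, he2, he3, Matrix.submatrix_apply, Matrix.fromBlocks]
            field_simp
            ring
      · rcases i with i | i
        · fin_cases i
          rcases j with j | j
          · fin_cases j
            simp [hB, he1, he2, Matrix.submatrix_apply, Matrix.fromBlocks,
              Matrix.updateRow_ne, Matrix.one_apply]
          · rcases j with j | j
            · fin_cases j
              simp [hB, he1, he2, Matrix.submatrix_apply, Matrix.fromBlocks,
                Matrix.updateRow_ne, Matrix.one_apply]
            · simp [hB, he1, he2, he3, Matrix.submatrix_apply, Matrix.fromBlocks,
                Matrix.updateRow_ne]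
        · rcases j with j | j
          · fin_cases j
            simp [hB, he1, he2, he3, Matrix.submatrix_apply, Matrix.fromBlocks,
              Matrix.updateRow_ne, Matrix.transpose_apply]
          · rcases j with j | j
            · fin_cases j
              simp [hB, he1, he2, he3, Matrix.submatrix_apply, Matrix.fromBlocks,
                Matrix.updateRow_ne, Matrix.transpose_apply]
            · simp [hB, he2, he3, Matrix.submatrix_apply, Matrix.fromBlocks,
                Matrix.updateRow_ne]
    rw [← hdetB, ← hrow, hblock, Matrix.det_fromBlocks_zero₁₂]
    simp [Matrix.det_fin_one]
  refine ⟨key, ?_⟩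
  rw [key]
  have h : -(ω₀ ^ 2 / a) ≠ 0 := by
    simp [div_eq_zero_iff, ha, pow_eq_zero_iff, hω₀]
  constructor
  · intro h1; exact mul_ne_zero h h1
  · intro h1 h2; exact h1 (by rw [h2, mul_zero])
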